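/- For all positive integers m and n, the set B = {(i,j) ∈ V(HD(m,n)) : i + j = m − 1} ∪ {(i,j) ∈ V(HD(m,n)) : j = i + m} has cardinality m + n and is a zero forcing set of the Hopi rectangle graph HD(m,n); in particular Z(HD(m,n)) ≤ m + n. -/

import Mathlib

/-- One round of the zero forcing color change rule, where vertices in the
leak set `L` are not permitted to force. A blue vertex `u ∉ L` with exactly one
non-blue neighbor `v` turns `v` blue. -/
def zfStep {V : Type*} (G : SimpleGraph V) (L : Set V) (B : Set V) : Set V :=
  B ∪ {v | ∃ u ∈ B, u ∉ L ∧ G.Adj u v ∧ ∀ w, G.Adj u w → w ∉ B → w = v}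

/-- The set of vertices eventually colored blue starting from `B`, with leaks `L`. -/
def zfClosure {V : Type*} (G : SimpleGraph V) (L : Set V) (B : Set V) : Set V :=
  ⋃ k, (zfStep G L)^[k] B

/-- `B` is an `ℓ`-leaky forcing set: for every leak set of size at most `ℓ`,
starting with exactly `B` blue, eventually every vertex becomes blue. -/
def IsLeakyForcingSet {V : Type*} (G : SimpleGraph V) (ℓ : ℕ) (B : Set V) : Prop :=
  ∀ L : Set V, L.ncard ≤ ℓ → zfClosure G L B = Set.univ

/-- `B` is a zero forcing set (no leaks). -/
def IsZeroForcingSet {V : Type*} (G : SimpleGraph V) (B : Set V) : Prop :=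
  zfClosure G (∅ : Set V) B = Set.univ

/-- The zero forcing number `Z(G)`: minimum cardinality of a zero forcing set. -/
noncomputable def zfNumber {V : Type*} (G : SimpleGraph V) : ℕ :=
  sInf (Set.ncard '' {B : Set V | IsZeroForcingSet G B})

/-- The `ℓ`-leaky forcing number `Z_(ℓ)(G)`: minimum cardinality of an
`ℓ`-leaky forcing set. -/
noncomputable def leakyNumber {V : Type*} (G : SimpleGraph V) (ℓ : ℕ) : ℕ :=
  sInf (Set.ncard '' {B : Set V | IsLeakyForcingSet G ℓ B})

/-- The vertex set of the Hopi rectangle graph of order `(m,n)`: the set of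
integer lattice points `(i,j)` with `m-1 ≤ i+j ≤ 2n+m-1` and `|i-j| ≤ m`
(realized as a `Finset` by filtering a sufficiently large box). -/
noncomputable def HDverts (m n : ℕ) : Finset (ℤ × ℤ) :=
  (Finset.Icc (-2 : ℤ) (2*n + 2*m) ×ˢ Finset.Icc (-2 : ℤ) (2*n + 2*m)).filter
    (fun p => (m : ℤ) - 1 ≤ p.1 + p.2 ∧ p.1 + p.2 ≤ 2*n + m - 1 ∧ |p.1 - p.2| ≤ m)

/-- The Hopi rectangle graph `HD(m,n)`: vertices are the points of `HDverts m n`,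
and `(i,j)` is adjacent to `(i',j')` iff `|i - i'| + |j - j'| = 1`. -/
def HD (m n : ℕ) : SimpleGraph {p : ℤ × ℤ // p ∈ HDverts m n} where
  Adj u v := |u.val.1 - v.val.1| + |u.val.2 - v.val.2| = 1
  symm := by
    refine ⟨?_⟩
    intro u v h
    show |v.val.1 - u.val.1| + |v.val.2 - u.val.2| = 1
    rw [abs_sub_comm v.val.1 u.val.1, abs_sub_comm v.val.2 u.val.2]
    exact h
  loopless := by refine ⟨?_⟩; intro u h; simp at h

/-- The set `B = {(i,j) : i + j = m - 1} ∪ {(i,j) : j = i + m}` of vertices of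
`HD(m,n)`. -/
def HDB (m n : ℕ) : Set {p : ℤ × ℤ // p ∈ HDverts m n} :=
  {v | v.val.1 + v.val.2 = (m : ℤ) - 1} ∪ {v | v.val.2 = v.val.1 + (m : ℤ)}

/- ### Generic zero-forcing lemmas -/

lemma zfStep_supset {V : Type*} (G : SimpleGraph V) (L B : Set V) : B ⊆ zfStep G L B :=
  Set.subset_union_left

lemma iter_mono {V : Type*} (G : SimpleGraph V) (L B : Set V) :
    Monotone (fun k => (zfStep G L)^[k] B) := by
  apply monotone_nat_of_le_succ
  intro k
  rw [Function.iterate_succ_apply']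
  exact zfStep_supset G L _

lemma mem_zfClosure_of_mem {V : Type*} {G : SimpleGraph V} {L B : Set V} {v : V}
    (h : v ∈ B) : v ∈ zfClosure G L B :=
  Set.mem_iUnion.2 ⟨0, h⟩

lemma finset_subset_iter {V : Type*} {G : SimpleGraph V} {L B : Set V} (F : Finset V)
    (hS : ↑F ⊆ zfClosure G L B) :
    ∃ K, ↑F ⊆ (zfStep G L)^[K] B := by
  classical
  induction F using Finset.induction_on with
  | empty => exact ⟨0, by simp⟩
  | @insert a S ha ih =>
    obtain ⟨K₁, hK₁⟩ := ih (fun x hx => hS (by simp only [Finset.coe_insert, Set.mem_insert_iff]; right; exact hx))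
    obtain ⟨K₂, hK₂⟩ := Set.mem_iUnion.1 (hS (Finset.mem_coe.2 (Finset.mem_insert_self a S)))
    refine ⟨max K₁ K₂, ?_⟩
    intro x hx
    rcases Finset.mem_insert.1 hx with rfl | hx
    · exact iter_mono G L B (le_max_right K₁ K₂) hK₂
    · exact iter_mono G L B (le_max_left K₁ K₂) (hK₁ hx)

lemma finite_subset_iter {V : Type*} {G : SimpleGraph V} {L B : Set V} {S : Set V}
    (hfin : S.Finite) (hS : S ⊆ zfClosure G L B) :
    ∃ K, S ⊆ (zfStep G L)^[K] B := by
  obtain ⟨K, hK⟩ := finset_subset_iter hfin.toFinset (by rwa [Set.Finite.coe_toFinset])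
  exact ⟨K, by rwa [Set.Finite.coe_toFinset] at hK⟩

lemma force_closure {V : Type*} [Finite V] (G : SimpleGraph V) (B : Set V) {u v : V}
    (hu : u ∈ zfClosure G ∅ B) (huv : G.Adj u v)
    (h : ∀ w, G.Adj u w → w ≠ v → w ∈ zfClosure G ∅ B) :
    v ∈ zfClosure G ∅ B := by
  classical
  have hS : (insert u {w | G.Adj u w ∧ w ≠ v}) ⊆ zfClosure G ∅ B := by
    rintro x (rfl | ⟨hx1, hx2⟩)
    · exact hu
    · exact h x hx1 hx2
  obtain ⟨K, hK⟩ := finite_subset_iter (Set.toFinite _) hS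
  refine Set.mem_iUnion.2 ⟨K + 1, ?_⟩
  rw [Function.iterate_succ_apply']
  refine Set.mem_union_right _ ⟨u, hK (Set.mem_insert _ _), Set.notMem_empty u, huv, ?_⟩
  intro w hw hwB
  by_contra hne
  exact hwB (hK (Set.mem_insert_of_mem _ ⟨hw, hne⟩))

/- ### HD-specific lemmas -/

lemma abs_add_abs_eq_one {a b : ℤ} (h : |a| + |b| = 1) :
    (a = 1 ∧ b = 0) ∨ (a = -1 ∧ b = 0) ∨ (a = 0 ∧ b = 1) ∨ (a = 0 ∧ b = -1) := by
  rcases abs_cases a with ⟨h1, h1'⟩ | ⟨h1, h1'⟩ <;>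
    rcases abs_cases b with ⟨h2, h2'⟩ | ⟨h2, h2'⟩ <;> omega

lemma mem_HDverts {m n : ℕ} {p : ℤ × ℤ} :
    p ∈ HDverts m n ↔ ((m : ℤ) - 1 ≤ p.1 + p.2 ∧ p.1 + p.2 ≤ 2*n + m - 1 ∧
      -(m : ℤ) ≤ p.1 - p.2 ∧ p.1 - p.2 ≤ m) := by
  simp only [HDverts, Finset.mem_filter, Finset.mem_product, Finset.mem_Icc, abs_le]
  constructor
  · rintro ⟨⟨⟨_, _⟩, _, _⟩, h1, h2, h3, h4⟩
    exact ⟨h1, h2, h3, h4⟩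
  · rintro ⟨h1, h2, h3, h4⟩
    refine ⟨⟨⟨?_, ?_⟩, ?_, ?_⟩, h1, h2, h3, h4⟩ <;> omega

lemma HD_all_forced (m n : ℕ) (hm : 0 < m) (hn : 0 < n)
    (v : {p : ℤ × ℤ // p ∈ HDverts m n}) :
    v ∈ zfClosure (HD m n) ∅ (HDB m n) := by
  have key : ∀ k : ℕ, ∀ v : {p : ℤ × ℤ // p ∈ HDverts m n},
      (2 * v.val.1 + v.val.2).toNat ≤ k → v ∈ zfClosure (HD m n) ∅ (HDB m n) := by
    intro k
    induction k using Nat.strong_induction_on with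
    | _ k ih =>
      intro v hvk
      by_cases hB : v ∈ HDB m n
      · exact mem_zfClosure_of_mem hB
      obtain ⟨h1, h2, h3, h4⟩ := mem_HDverts.1 v.2
      have hne1 : v.val.1 + v.val.2 ≠ (m : ℤ) - 1 := fun h => hB (Or.inl h)
      have hne2 : v.val.2 ≠ v.val.1 + (m : ℤ) := fun h => hB (Or.inr h)
      set i := v.val.1 with hidef
      set j := v.val.2 with hjdef
      have hu : (i - 1, j) ∈ HDverts m n := by
        rw [mem_HDverts]; dsimp only; omega
      set u : {p : ℤ × ℤ // p ∈ HDverts m n} := ⟨(i - 1, j), hu⟩ with hudef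
      have huv : (HD m n).Adj u v := by
        show |(i - 1) - i| + |j - j| = 1
        have e1 : (i - 1) - i = -1 := by ring
        have e2 : j - j = 0 := by ring
        rw [e1, e2]; simp
      have hk1 : 1 ≤ k := by omega
      have hucl : u ∈ zfClosure (HD m n) ∅ (HDB m n) := by
        apply ih (k - 1) (by omega) u
        show (2 * ((i - 1, j) : ℤ × ℤ).1 + ((i - 1, j) : ℤ × ℤ).2).toNat ≤ k - 1
        dsimp only
        omega
      refine force_closure (HD m n) (HDB m n) hucl huv ?_
      intro w hw hwv
      have hw' : |(i - 1) - w.val.1| + |j - w.val.2| = 1 := hw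
      obtain ⟨hq1, hq2, hq3, hq4⟩ := mem_HDverts.1 w.2
      rcases abs_add_abs_eq_one hw' with ⟨e1, e2⟩ | ⟨e1, e2⟩ | ⟨e1, e2⟩ | ⟨e1, e2⟩
      · -- w = (i - 2, j)
        exact ih (k - 1) (by omega) w (by omega)
      · -- w = (i, j), i.e. w = v
        exact absurd (Subtype.ext (Prod.ext (by omega) (by omega))) hwv
      · -- w = (i - 1, j - 1)
        exact ih (k - 1) (by omega) w (by omega)
      · -- w = (i - 1, j + 1)
        exact ih (k - 1) (by omega) w (by omega)
  exact key (2 * v.val.1 + v.val.2).toNat v le_rfl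

lemma HDB_ncard (m n : ℕ) (hm : 0 < m) (hn : 0 < n) : (HDB m n).ncard = m + n := by
  classical
  have hinj1 : Function.Injective (fun i : ℕ => ((i : ℤ), (m : ℤ) - 1 - i)) := by
    intro a b h
    have := congrArg Prod.fst h
    simpa using this
  have hinj2 : Function.Injective (fun i : ℕ => ((i : ℤ), (i : ℤ) + m)) := by
    intro a b h
    have := congrArg Prod.fst h
    simpa using this
  have himg : Subtype.val '' (HDB m n) =
      ↑(((Finset.range m).image (fun i : ℕ => ((i : ℤ), (m : ℤ) - 1 - i))) ∪
        ((Finset.range n).image (fun i : ℕ => ((i : ℤ), (i : ℤ) + m)))) := by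
    ext p
    simp only [Set.mem_image, Finset.coe_union, Set.mem_union, Finset.coe_image,
      Finset.coe_range, Set.mem_image, Set.mem_Iio]
    constructor
    · rintro ⟨⟨q, hq⟩, hmem, rfl⟩
      obtain ⟨c1, c2, c3, c4⟩ := mem_HDverts.1 hq
      simp only [HDB, Set.mem_union, Set.mem_setOf_eq] at hmem
      rcases hmem with hline | hline
      · left
        refine ⟨q.1.toNat, by omega, ?_⟩
        apply Prod.ext <;> dsimp only <;> omega
      · right
        refine ⟨q.1.toNat, by omega, ?_⟩
        apply Prod.ext <;> dsimp only <;> omega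
    · rintro (⟨a, ha, rfl⟩ | ⟨a, ha, rfl⟩)
      · refine ⟨⟨((a : ℤ), (m : ℤ) - 1 - a), ?_⟩, ?_, rfl⟩
        · rw [mem_HDverts]; dsimp only; omega
        · simp only [HDB, Set.mem_union, Set.mem_setOf_eq]
          left; ring
      · refine ⟨⟨((a : ℤ), (a : ℤ) + m), ?_⟩, ?_, rfl⟩
        · rw [mem_HDverts]; dsimp only; omega
        · simp only [HDB, Set.mem_union, Set.mem_setOf_eq]
          right; dsimp only
  have hdisj : Disjoint ((Finset.range m).image (fun i : ℕ => ((i : ℤ), (m : ℤ) - 1 - i)))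
      ((Finset.range n).image (fun i : ℕ => ((i : ℤ), (i : ℤ) + m))) := by
    rw [Finset.disjoint_left]
    intro p hp1 hp2
    simp only [Finset.mem_image, Finset.mem_range] at hp1 hp2
    obtain ⟨a, ha, rfl⟩ := hp1
    obtain ⟨b, hb, hba⟩ := hp2
    have h1 := congrArg Prod.fst hba
    have h2 := congrArg Prod.snd hba
    dsimp only at h1 h2
    omega
  calc (HDB m n).ncard = (Subtype.val '' (HDB m n)).ncard :=
        (Set.ncard_image_of_injective _ Subtype.val_injective).symm
    _ = m + n := by
        rw [himg, Set.ncard_coe_finset, Finset.card_union_of_disjoint hdisj,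
          Finset.card_image_of_injective _ hinj1, Finset.card_image_of_injective _ hinj2,
          Finset.card_range, Finset.card_range]

/-- The set `B = {(i,j) : i + j = m - 1} ∪ {(i,j) : j = i + m}` has cardinality
`m + n` and is a zero forcing set of `HD(m,n)`; in particular
`Z(HD(m,n)) ≤ m + n`. -/
theorem HDB_is_zero_forcing (m n : ℕ) (hm : 0 < m) (hn : 0 < n) :
    (HDB m n).ncard = m + n ∧ IsZeroForcingSet (HD m n) (HDB m n) ∧
      zfNumber (HD m n) ≤ m + n := by
  have hcard := HDB_ncard m n hm hn
  have hforce : IsZeroForcingSet (HD m n) (HDB m n) :=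
    Set.eq_univ_iff_forall.2 (fun v => HD_all_forced m n hm hn v)
  exact ⟨hcard, hforce, Nat.sInf_le ⟨HDB m n, hforce, hcard⟩⟩
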